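/- arXiv:2101.00426 — 4 statements merged into one kernel-verified Lean document; each statement's English description precedes it below -/
import Mathlib

section
/- Let φ₁ < φ₂ < φ₃ < φ₄ with φ₄ − φ₁ < 2π, and let x = s₁e^{iφ} with arg x ∈ [φ₁, φ₂], y = s₂e^{iψ} with arg y ∈ [φ₃, φ₄], where s₁, s₂ ≥ 0. Then the Euclidean distance satisfies d(x, y) ≥ c·√(s₁² + s₂²), where c = √(1 − max{cos(φ₃ − φ₂), cos(φ₄ − φ₁), 0}). -/
/-- Distance lower bound between points in disjoint angular sectors:
if `arg x ∈ [φ₁, φ₂]` and `arg y ∈ [φ₃, φ₄]` with `φ₁ < φ₂ < φ₃ < φ₄`, `φ₄ - φ₁ < 2π`,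
then `d(x,y) ≥ c √(s₁² + s₂²)` with
`c = √(1 − max{cos(φ₃ − φ₂), cos(φ₄ − φ₁), 0})`. -/
theorem stmt2 (φ₁ φ₂ φ₃ φ₄ φ ψ s₁ s₂ : ℝ)
    (h12 : φ₁ < φ₂) (h23 : φ₂ < φ₃) (h34 : φ₃ < φ₄) (h41 : φ₄ - φ₁ < 2 * Real.pi)
    (hs₁ : 0 ≤ s₁) (hs₂ : 0 ≤ s₂)
    (hφ : φ ∈ Set.Icc φ₁ φ₂) (hψ : ψ ∈ Set.Icc φ₃ φ₄) :
    Real.sqrt (1 - max (max (Real.cos (φ₃ - φ₂)) (Real.cos (φ₄ - φ₁))) 0) *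
      Real.sqrt (s₁ ^ 2 + s₂ ^ 2)
      ≤ ‖((s₁ : ℂ) * Complex.exp ((φ : ℂ) * Complex.I)
          - (s₂ : ℂ) * Complex.exp ((ψ : ℂ) * Complex.I))‖ := by
  obtain ⟨hφ1, hφ2⟩ := hφ
  obtain ⟨hψ1, hψ2⟩ := hψ
  set M := max (max (Real.cos (φ₃ - φ₂)) (Real.cos (φ₄ - φ₁))) 0 with hM
  have hM0 : 0 ≤ M := le_max_right _ _
  have hθ1 : φ₃ - φ₂ ≤ ψ - φ := by linarith
  have hθ2 : ψ - φ ≤ φ₄ - φ₁ := by linarith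
  have hθpos : 0 < φ₃ - φ₂ := by linarith
  have hcos : Real.cos (ψ - φ) ≤ M := by
    rcases le_total (ψ - φ) Real.pi with h | h
    · have : Real.cos (ψ - φ) ≤ Real.cos (φ₃ - φ₂) :=
        Real.cos_le_cos_of_nonneg_of_le_pi (le_of_lt hθpos) h hθ1
      exact this.trans ((le_max_left _ _).trans (le_max_left _ _))
    · have h1 : Real.cos (ψ - φ) = Real.cos (2 * Real.pi - (ψ - φ)) :=
        (Real.cos_two_pi_sub _).symm
      have h2 : Real.cos (φ₄ - φ₁) = Real.cos (2 * Real.pi - (φ₄ - φ₁)) :=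
        (Real.cos_two_pi_sub _).symm
      have : Real.cos (2 * Real.pi - (ψ - φ)) ≤ Real.cos (2 * Real.pi - (φ₄ - φ₁)) := by
        apply Real.cos_le_cos_of_nonneg_of_le_pi (by linarith) (by linarith [Real.pi_pos])
        linarith
      rw [← h1, ← h2] at this
      exact this.trans ((le_max_right _ _).trans (le_max_left _ _))
  have key : (‖((s₁ : ℂ) * Complex.exp ((φ : ℂ) * Complex.I)
          - (s₂ : ℂ) * Complex.exp ((ψ : ℂ) * Complex.I))‖) ^ 2
      = s₁ ^ 2 + s₂ ^ 2 - 2 * s₁ * s₂ * Real.cos (ψ - φ) := by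
    rw [Complex.sq_norm, Complex.exp_mul_I, Complex.exp_mul_I]
    simp [Complex.normSq_apply, Real.cos_sub, Complex.cos_ofReal_re, Complex.sin_ofReal_re]
    nlinarith [Real.sin_sq_add_cos_sq φ, Real.sin_sq_add_cos_sq ψ]
  have habs : 0 ≤ ‖((s₁ : ℂ) * Complex.exp ((φ : ℂ) * Complex.I)
          - (s₂ : ℂ) * Complex.exp ((ψ : ℂ) * Complex.I))‖ := norm_nonneg _
  have hM1 : M ≤ 1 := max_le (max_le (Real.cos_le_one _) (Real.cos_le_one _)) zero_le_one
  rw [← Real.sqrt_mul (by linarith) (s₁ ^ 2 + s₂ ^ 2)]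
  rw [show ‖((s₁ : ℂ) * Complex.exp ((φ : ℂ) * Complex.I)
          - (s₂ : ℂ) * Complex.exp ((ψ : ℂ) * Complex.I))‖
      = Real.sqrt ((‖((s₁ : ℂ) * Complex.exp ((φ : ℂ) * Complex.I)
          - (s₂ : ℂ) * Complex.exp ((ψ : ℂ) * Complex.I))‖) ^ 2) from
      (Real.sqrt_sq habs).symm]
  apply Real.sqrt_le_sqrt
  rw [key]
  nlinarith [sq_nonneg (s₁ - s₂), mul_nonneg hs₁ hs₂]
end

section
/- Let G be a group, 𝓑 a unital C*-algebra with trivial center, γ̂_g automorphisms of 𝓑 and v(g,h) ∈ 𝓑 unitaries with γ̂_g γ̂_h = Ad(v(g,h)) γ̂_{gh}. Define c(g,h,k) ∈ 𝕋 by v(g,h)v(gh,k) = c(g,h,k)·γ̂_g(v(h,k))·v(g,hk). Then c satisfies the 3-cocycle identity: c(g,h,k)·c(g,hk,f)·c(h,k,f) = c(g,h,kf)·c(gh,k,f) for all g,h,k,f ∈ G. -/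
/-- The scalars `c(g,h,k)` attached to a cocycle action of `G` on a unital C*-algebra
with trivial center satisfy the 3-cocycle identity
`c(g,h,k)·c(g,hk,f)·c(h,k,f) = c(g,h,kf)·c(gh,k,f)`. -/
theorem stmt7 {G : Type*} [Group G]
    {B : Type*} [NormedRing B] [StarRing B] [CStarRing B] [CompleteSpace B]
    [NormedAlgebra ℂ B] [StarModule ℂ B] [Nontrivial B]
    (hcenter : ∀ x : B, (∀ y : B, x * y = y * x) → ∃ z : ℂ, x = z • (1 : B))
    (v : G → G → B) (hv : ∀ g h, v g h ∈ unitary B)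
    (γ : G → B ≃⋆ₐ[ℂ] B)
    (hrel : ∀ g h x, γ g (γ h x) = v g h * γ (g * h) x * star (v g h))
    (c : G → G → G → ℂ) (hc : ∀ g h k, ‖c g h k‖ = 1)
    (hdef : ∀ g h k, v g h * v (g * h) k = c g h k • (γ g (v h k) * v g (h * k))) :
    ∀ g h k f : G,
      c g h k * c g (h * k) f * c h k f = c g h (k * f) * c (g * h) k f := by
  intro g h k f
  -- γ preserves unitaries
  have hγu : ∀ (g : G) (x : B), x ∈ unitary B → γ g x ∈ unitary B := by
    intro g x hx
    rw [Unitary.mem_iff] at hx ⊢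
    constructor
    · rw [← map_star, ← map_mul, hx.1, map_one]
    · rw [← map_star, ← map_mul, hx.2, map_one]
  -- v g h * γ (g*h) x = γ g (γ h x) * v g h
  have hswap : ∀ (g h : G) (x : B),
      v g h * γ (g * h) x = γ g (γ h x) * v g h := by
    intro g h x
    have h1 : star (v g h) * v g h = 1 := (Unitary.mem_iff.mp (hv g h)).1
    rw [hrel, mul_assoc, mul_assoc, h1, mul_one]
  set X : B := γ g (γ h (v k f)) * γ g (v h (k * f)) * v g (h * (k * f)) with hX
  have hXu : X ∈ unitary B :=
    mul_mem (mul_mem (hγu g _ (hγu h _ (hv k f)))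
      (hγu g _ (hv h (k * f)))) (hv g (h * (k * f)))
  have hXne : X ≠ 0 := by
    intro h0
    have := (Unitary.mem_iff.mp hXu).1
    rw [h0, mul_zero] at this
    exact one_ne_zero this.symm
  -- Way 1
  have e1 : v g h * v (g * h) k * v (g * h * k) f
      = (c g h k * c g (h * k) f * c h k f) • X := by
    calc v g h * v (g * h) k * v (g * h * k) f
        = c g h k • (γ g (v h k) * v g (h * k) * v (g * h * k) f) := by
          rw [hdef, smul_mul_assoc]
      _ = c g h k • (γ g (v h k) * (v g (h * k) * v (g * (h * k)) f)) := by
          rw [mul_assoc, mul_assoc g h k]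
      _ = c g h k • (γ g (v h k) * (c g (h * k) f •
            (γ g (v (h * k) f) * v g (h * k * f)))) := by rw [hdef]
      _ = (c g h k * c g (h * k) f) •
            (γ g (v h k * v (h * k) f) * v g (h * k * f)) := by
          simp [mul_smul_comm, smul_smul, map_mul, mul_assoc]
      _ = (c g h k * c g (h * k) f) •
            ((c h k f • γ g (γ h (v k f) * v h (k * f))) * v g (h * k * f)) := by
          rw [hdef, map_smul, map_mul]
      _ = (c g h k * c g (h * k) f * c h k f) • X := by
          rw [smul_mul_assoc, smul_smul, hX, map_mul, mul_assoc _ k f,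
            mul_assoc (γ g (γ h (v k f)))]
  -- Way 2
  have e2 : v g h * v (g * h) k * v (g * h * k) f
      = (c g h (k * f) * c (g * h) k f) • X := by
    calc v g h * v (g * h) k * v (g * h * k) f
        = v g h * (v (g * h) k * v (g * h * k) f) := by rw [mul_assoc]
      _ = v g h * (c (g * h) k f • (γ (g * h) (v k f) * v (g * h) (k * f))) := by
          rw [hdef]
      _ = c (g * h) k f • (v g h * γ (g * h) (v k f) * v (g * h) (k * f)) := by
          rw [mul_smul_comm, mul_assoc]
      _ = c (g * h) k f • (γ g (γ h (v k f)) * (v g h * v (g * h) (k * f))) := by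
          rw [hswap, mul_assoc]
      _ = c (g * h) k f • (γ g (γ h (v k f)) *
            (c g h (k * f) • (γ g (v h (k * f)) * v g (h * (k * f))))) := by
          rw [hdef]
      _ = (c g h (k * f) * c (g * h) k f) • X := by
          rw [mul_smul_comm, smul_smul, hX, mul_comm (c g h (k * f)), mul_assoc]
  have := e1.symm.trans e2
  exact smul_left_injective ℂ hXne this
end

section
/- Let H be a Hilbert space decomposed as H = H_L ⊗ H_R, and let u(g,h) ∈ U(H_R) for g,h in a group G, with W_g ∈ U(H) for g ∈ G, satisfying: (a) each Ad(W_g)(1 ⊗ u(h,k)) ∈ ℂ1 ⊗ B(H_R), (b) Ad(W_g W_h) = Ad((1 ⊗ u(g,h)) W_{gh}) on B(H), and (c) 1 ⊗ u(g,h)u(gh,k) = c(g,h,k)·(W_g(1 ⊗ u(h,k))W_g*)·(1 ⊗ u(g,hk)) for some c: G³ → 𝕋. Then c is a 3-cocycle: c(g,h,k)c(g,hk,f)c(h,k,f) = c(g,h,kf)c(gh,k,f) for all g,h,k,f ∈ G. -/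
/-- Cocycle identity for the scalars associated to unitaries on `H = H_L ⊗ H_R`:
the factor `ℂ1 ⊗ B(H_R)` is represented by the range of a unital *-embedding
`ι : B(H_R) → B(H)`.  If (a) `Ad(W_g)` maps `1 ⊗ u(h,k)` into `ℂ1 ⊗ B(H_R)`,
(b) `Ad(W_g W_h) = Ad((1 ⊗ u(g,h)) W_{gh})`, and
(c) `1 ⊗ u(g,h)u(gh,k) = c(g,h,k)·Ad(W_g)(1 ⊗ u(h,k))·(1 ⊗ u(g,hk))`,
then `c` is a 3-cocycle. -/
theorem stmt10 {G : Type*} [Group G]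
    {H HR : Type*}
    [NormedAddCommGroup H] [InnerProductSpace ℂ H] [CompleteSpace H]
    [NormedAddCommGroup HR] [InnerProductSpace ℂ HR] [CompleteSpace HR]
    [Nontrivial HR]
    (ι : (HR →L[ℂ] HR) →⋆ₐ[ℂ] (H →L[ℂ] H)) (hι : Function.Injective ι)
    (u : G → G → HR →L[ℂ] HR) (hu : ∀ g h, u g h ∈ unitary (HR →L[ℂ] HR))
    (W : G → H →L[ℂ] H) (hW : ∀ g, W g ∈ unitary (H →L[ℂ] H))
    (c : G → G → G → ℂ) (hc : ∀ g h k, ‖c g h k‖ = 1)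
    (ha : ∀ g h k : G, ∃ x : HR →L[ℂ] HR,
      W g * ι (u h k) * star (W g) = ι x)
    (hb : ∀ (g h : G) (A : H →L[ℂ] H),
      (W g * W h) * A * star (W g * W h)
        = (ι (u g h) * W (g * h)) * A * star (ι (u g h) * W (g * h)))
    (hcrel : ∀ g h k : G,
      ι (u g h * u (g * h) k)
        = c g h k • ((W g * ι (u h k) * star (W g)) * ι (u g (h * k)))) :
    ∀ g h k f : G,
      c g h k * c g (h * k) f * c h k f = c g h (k * f) * c (g * h) k f := by
  intro g h k f
  -- notation for Ad(W g)
  set A : G → (H →L[ℂ] H) → (H →L[ℂ] H) := fun g x => W g * x * star (W g) with hAdef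
  have hWs : ∀ g : G, star (W g) * W g = 1 := fun g => (Unitary.mem_iff.mp (hW g)).1
  have hWs' : ∀ g : G, W g * star (W g) = 1 := fun g => (Unitary.mem_iff.mp (hW g)).2
  have hιun : ∀ x : HR →L[ℂ] HR, x ∈ unitary (HR →L[ℂ] HR) →
      ι x ∈ unitary (H →L[ℂ] H) := by
    intro x hx
    rw [Unitary.mem_iff] at hx ⊢
    constructor
    · rw [← map_star, ← map_mul, hx.1, map_one]
    · rw [← map_star, ← map_mul, hx.2, map_one]
  have hιs : ∀ g h : G, star (ι (u g h)) * ι (u g h) = 1 :=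
    fun g h => (Unitary.mem_iff.mp (hιun _ (hu g h))).1
  -- multiplicativity of Ad(W g)
  have hβmul : ∀ (g : G) (x y : H →L[ℂ] H), A g x * A g y = A g (x * y) := by
    intro g x y
    simp only [hAdef, mul_assoc]
    rw [← mul_assoc (star (W g)) (W g), hWs, one_mul]
  have hβsmul : ∀ (g : G) (a : ℂ) (x : H →L[ℂ] H), A g (a • x) = a • A g x := by
    intro g a x
    simp only [hAdef, mul_smul_comm, smul_mul_assoc]
  -- the key intertwining relation from (b)
  have hkey : ∀ (g h : G) (Y : H →L[ℂ] H),
      ι (u g h) * A (g * h) Y = A g (A h Y) * ι (u g h) := by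
    intro g h Y
    have hb' := hb g h Y
    have : (W g * W h) * Y * star (W g * W h) * ι (u g h)
        = (ι (u g h) * W (g * h)) * Y * star (ι (u g h) * W (g * h)) * ι (u g h) := by
      rw [hb']
    calc ι (u g h) * A (g * h) Y
        = (ι (u g h) * W (g * h)) * Y * (star (W (g * h)) * (star (ι (u g h)) * ι (u g h))) := by
          simp only [hAdef, hιs, mul_one, mul_assoc]
      _ = (ι (u g h) * W (g * h)) * Y * star (ι (u g h) * W (g * h)) * ι (u g h) := by
          rw [star_mul]; simp only [mul_assoc]
      _ = (W g * W h) * Y * star (W g * W h) * ι (u g h) := by rw [hb']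
      _ = A g (A h Y) * ι (u g h) := by
          rw [star_mul]; simp only [hAdef, mul_assoc]
  -- define the common operator and the product
  set X : H →L[ℂ] H := A g (ι (u h k * u (h * k) f)) * ι (u g (h * k * f)) with hXdef
  set E : H →L[ℂ] H := ι (u g h) * ι (u (g * h) k) * ι (u (g * h * k) f) with hEdef
  -- way 1
  have way1 : E = (c g h k * c g (h * k) f) • X := by
    calc E = ι (u g h * u (g * h) k) * ι (u (g * h * k) f) := by rw [hEdef, map_mul]
      _ = c g h k • (A g (ι (u h k)) * ι (u g (h * k)) * ι (u (g * (h * k)) f)) := by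
          rw [hcrel g h k, smul_mul_assoc, mul_assoc g h k]
      _ = c g h k • (A g (ι (u h k)) * ι (u g (h * k) * u (g * (h * k)) f)) := by
          rw [map_mul, mul_assoc]
      _ = c g h k • (A g (ι (u h k)) *
            (c g (h * k) f • (A g (ι (u (h * k) f)) * ι (u g (h * k * f))))) := by
          rw [hcrel g (h * k) f]
      _ = (c g h k * c g (h * k) f) •
            (A g (ι (u h k)) * A g (ι (u (h * k) f)) * ι (u g (h * k * f))) := by
          rw [mul_smul_comm, smul_smul, mul_assoc]
          simp only [hAdef, mul_assoc]
      _ = (c g h k * c g (h * k) f) • X := by rw [hβmul, ← map_mul, hXdef]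
  -- way 2
  have way2 : c h k f • E = (c g h (k * f) * c (g * h) k f) • X := by
    calc c h k f • E
        = c h k f • (ι (u g h) * ι (u (g * h) k * u (g * h * k) f)) := by
          rw [hEdef, map_mul, mul_assoc]
      _ = c h k f • (ι (u g h) *
            (c (g * h) k f • (A (g * h) (ι (u k f)) * ι (u (g * h) (k * f))))) := by
          rw [hcrel (g * h) k f]
      _ = (c h k f * c (g * h) k f) •
            (ι (u g h) * A (g * h) (ι (u k f)) * ι (u (g * h) (k * f))) := by
          rw [mul_smul_comm, smul_smul, mul_assoc]
          simp only [hAdef, mul_assoc]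
      _ = (c h k f * c (g * h) k f) •
            (A g (A h (ι (u k f))) * (ι (u g h) * ι (u (g * h) (k * f)))) := by
          rw [hkey, mul_assoc]
      _ = (c h k f * c (g * h) k f) •
            (A g (A h (ι (u k f))) * ι (u g h * u (g * h) (k * f))) := by
          rw [map_mul]
      _ = (c h k f * c (g * h) k f) •
            (A g (A h (ι (u k f))) *
              (c g h (k * f) • (A g (ι (u h (k * f))) * ι (u g (h * (k * f)))))) := by
          rw [hcrel g h (k * f)]
      _ = (c (g * h) k f * c g h (k * f)) •
            (A g (c h k f • (A h (ι (u k f)) * ι (u h (k * f)))) * ι (u g (h * (k * f)))) := by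
          simp only [hβsmul, ← hβmul, smul_mul_assoc, mul_smul_comm, smul_smul, mul_assoc]
          congr 1
          ring
      _ = (c (g * h) k f * c g h (k * f)) •
            (A g (ι (u h k * u (h * k) f)) * ι (u g (h * (k * f)))) := by
          rw [← hcrel h k f]
      _ = (c g h (k * f) * c (g * h) k f) • X := by
          rw [hXdef, ← mul_assoc h k f, mul_comm (c (g * h) k f)]
  -- X is unitary, hence X * star X = 1
  have hXun : X ∈ unitary (H →L[ℂ] H) := by
    refine mul_mem (mul_mem (mul_mem (hW g) (hιun _ (mul_mem (hu h k) (hu (h * k) f))))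
      (Unitary.star_mem (hW g))) (hιun _ (hu g (h * k * f)))
  have hXs : X * star X = 1 := (Unitary.mem_iff.mp hXun).2
  -- nontriviality of B(H)
  have h01 : (1 : H →L[ℂ] H) ≠ 0 := by
    intro hcon
    obtain ⟨x, hx⟩ := exists_ne (0 : HR)
    have h1 : (1 : HR →L[ℂ] HR) = 0 := hι (by rw [map_one, map_zero, hcon])
    exact hx (by simpa using DFunLike.congr_fun h1 x)
  -- compare the two ways
  have heq : (c h k f * (c g h k * c g (h * k) f)) • X
      = (c g h (k * f) * c (g * h) k f) • X := by
    rw [← smul_smul, ← way1, way2]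
  have heq1 : (c h k f * (c g h k * c g (h * k) f)) • (1 : H →L[ℂ] H)
      = (c g h (k * f) * c (g * h) k f) • 1 := by
    have := congrArg (· * star X) heq
    simpa only [smul_mul_assoc, hXs] using this
  have hscal := smul_left_injective ℂ h01 heq1
  linear_combination hscal
end

section
/- Let F: [0,∞) → (0,∞) be non-increasing with κ_{1,2} = Σ_{l=0}^∞ (l+1)²F(l) < ∞. Then for every m ∈ ℤ_{≥0} and 0 < c ≤ 1: Σ_{r₁=0}^∞ Σ over nonnegative integers r with √(r² + r₁²)·c ≥ m+1 of (r₁+1)·F(√(r² + r₁²)·c − (m+1)) ≤ (3/c)²·(2√2 + 1/c)²·π·(m+1)²·κ_{1,2}. -/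
set_option maxHeartbeats 2000000

open MeasureTheory in
lemma sq_count (R w : ℝ) (hR : 0 ≤ R) (hw : 0 ≤ w) (T : Finset (ℕ × ℕ))
    (hT : ∀ p ∈ T, R ≤ Real.sqrt ((p.2 : ℝ) ^ 2 + (p.1 : ℝ) ^ 2) ∧
      Real.sqrt ((p.2 : ℝ) ^ 2 + (p.1 : ℝ) ^ 2) < R + w) :
    (T.card : ℝ) ≤ Real.pi * ((R + w + Real.sqrt 2) ^ 2 - R ^ 2) := by
  set Q : ℕ × ℕ → Set ℂ := fun p =>
    Complex.measurableEquivRealProd ⁻¹'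
      (Set.Ico (p.2 : ℝ) ((p.2 : ℝ) + 1) ×ˢ Set.Ico (p.1 : ℝ) ((p.1 : ℝ) + 1)) with hQ
  have hmem : ∀ p z, z ∈ Q p ↔
      ((p.2 : ℝ) ≤ z.re ∧ z.re < (p.2 : ℝ) + 1) ∧ ((p.1 : ℝ) ≤ z.im ∧ z.im < (p.1 : ℝ) + 1) := by
    intro p z
    simp [hQ, Set.mem_preimage, Set.mem_prod, Set.mem_Ico]
  have hQmeas : ∀ p, MeasurableSet (Q p) :=
    fun p => (MeasurableSet.prod measurableSet_Ico measurableSet_Ico).preimage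
      Complex.measurableEquivRealProd.measurable
  have hQvol : ∀ p, volume (Q p) = 1 := by
    intro p
    rw [hQ]
    rw [Complex.volume_preserving_equiv_real_prod.measure_preimage
      ((measurableSet_Ico.prod measurableSet_Ico).nullMeasurableSet)]
    rw [Measure.volume_eq_prod, Measure.prod_prod, Real.volume_Ico, Real.volume_Ico]
    simp
  have hdisj : (↑T : Set (ℕ × ℕ)).PairwiseDisjoint Q := by
    intro p _ q _ hpq
    rw [Function.onFun, Set.disjoint_left]
    intro z hzp hzq
    rw [hmem] at hzp hzq
    apply hpq
    have h2 : p.2 = q.2 := by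
      by_contra h
      rcases Nat.lt_or_ge p.2 q.2 with h' | h'
      · have : (p.2 : ℝ) + 1 ≤ (q.2 : ℝ) := by exact_mod_cast Nat.succ_le_of_lt h'
        linarith [hzp.1.2, hzq.1.1]
      · have h'' : q.2 < p.2 := lt_of_le_of_ne h' (Ne.symm h)
        have : (q.2 : ℝ) + 1 ≤ (p.2 : ℝ) := by exact_mod_cast Nat.succ_le_of_lt h''
        linarith [hzq.1.2, hzp.1.1]
    have h1 : p.1 = q.1 := by
      by_contra h
      rcases Nat.lt_or_ge p.1 q.1 with h' | h'
      · have : (p.1 : ℝ) + 1 ≤ (q.1 : ℝ) := by exact_mod_cast Nat.succ_le_of_lt h'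
        linarith [hzp.2.2, hzq.2.1]
      · have h'' : q.1 < p.1 := lt_of_le_of_ne h' (Ne.symm h)
        have : (q.1 : ℝ) + 1 ≤ (p.1 : ℝ) := by exact_mod_cast Nat.succ_le_of_lt h''
        linarith [hzq.2.2, hzp.2.1]
    exact Prod.ext h1 h2
  have hsub : ∀ p ∈ T, Q p ⊆ Metric.closedBall (0 : ℂ) (R + w + Real.sqrt 2) \
      Metric.ball (0 : ℂ) R := by
    intro p hp z hz
    rw [hmem] at hz
    obtain ⟨⟨h2l, h2u⟩, ⟨h1l, h1u⟩⟩ := hz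
    have hS : (0 : ℝ) ≤ (p.2 : ℝ) ^ 2 + (p.1 : ℝ) ^ 2 := by positivity
    set S := (p.2 : ℝ) ^ 2 + (p.1 : ℝ) ^ 2 with hSdef
    have hsqS : Real.sqrt S ^ 2 = S := Real.sq_sqrt hS
    have hsqS0 : 0 ≤ Real.sqrt S := Real.sqrt_nonneg _
    have hsq2 : Real.sqrt 2 ^ 2 = 2 := Real.sq_sqrt (by norm_num)
    have hsq20 : 0 ≤ Real.sqrt 2 := Real.sqrt_nonneg _
    have habs : ‖z‖ = Real.sqrt (z.re ^ 2 + z.im ^ 2) := by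
      rw [Complex.norm_def, Complex.normSq_apply]; ring_nf
    have hzre0 : (0 : ℝ) ≤ z.re := le_trans (Nat.cast_nonneg _) h2l
    have hzim0 : (0 : ℝ) ≤ z.im := le_trans (Nat.cast_nonneg _) h1l
    have hlow : R ≤ ‖z‖ := by
      refine le_trans (hT p hp).1 ?_
      rw [habs]
      apply Real.sqrt_le_sqrt
      nlinarith [sq_nonneg z.re, sq_nonneg z.im]
    have hsum2 : (p.2 : ℝ) + (p.1 : ℝ) ≤ Real.sqrt 2 * Real.sqrt S := by
      rw [← Real.sqrt_mul (by norm_num : (0:ℝ) ≤ 2)]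
      rw [show ((p.2 : ℝ) + (p.1 : ℝ)) = Real.sqrt (((p.2 : ℝ) + (p.1 : ℝ)) ^ 2) from
        (Real.sqrt_sq (by positivity)).symm]
      apply Real.sqrt_le_sqrt
      nlinarith [sq_nonneg ((p.2 : ℝ) - (p.1 : ℝ))]
    have hup : ‖z‖ ≤ Real.sqrt S + Real.sqrt 2 := by
      rw [habs]
      rw [show Real.sqrt S + Real.sqrt 2 =
        Real.sqrt ((Real.sqrt S + Real.sqrt 2) ^ 2) from
        (Real.sqrt_sq (by positivity)).symm]
      apply Real.sqrt_le_sqrt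
      nlinarith
    constructor
    · rw [Metric.mem_closedBall, dist_zero_right]
      have := (hT p hp).2
      linarith
    · intro hball
      rw [Metric.mem_ball, dist_zero_right] at hball
      linarith
  -- measure counting
  have hA : volume (Metric.closedBall (0 : ℂ) (R + w + Real.sqrt 2) \ Metric.ball (0 : ℂ) R)
      ≤ ENNReal.ofReal (Real.pi * ((R + w + Real.sqrt 2) ^ 2 - R ^ 2)) := by
    rw [measure_diff (Metric.ball_subset_closedBall.trans
        (Metric.closedBall_subset_closedBall (by linarith [Real.sqrt_nonneg 2])))
      measurableSet_ball.nullMeasurableSet (by rw [Complex.volume_ball]; exact ENNReal.mul_ne_top (ENNReal.pow_ne_top ENNReal.ofReal_ne_top) ENNReal.coe_ne_top)]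
    rw [Complex.volume_ball, Complex.volume_closedBall]
    have h1 : (NNReal.pi : ENNReal) = ENNReal.ofReal Real.pi := by
      rw [← NNReal.coe_real_pi, ENNReal.ofReal_coe_nnreal]
    rw [h1, ← ENNReal.ofReal_pow (by linarith [Real.sqrt_nonneg 2] : (0:ℝ) ≤ R + w + Real.sqrt 2),
      ← ENNReal.ofReal_pow hR, ← ENNReal.ofReal_mul (by positivity),
      ← ENNReal.ofReal_mul (by positivity)]
    rw [← ENNReal.ofReal_sub _ (by positivity)]
    apply ENNReal.ofReal_le_ofReal
    ring_nf
    exact le_refl _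
  have hcard : (T.card : ENNReal) ≤
      ENNReal.ofReal (Real.pi * ((R + w + Real.sqrt 2) ^ 2 - R ^ 2)) := by
    calc (T.card : ENNReal) = ∑ p ∈ T, volume (Q p) := by
          simp [hQvol]
      _ = volume (⋃ p ∈ T, Q p) := (measure_biUnion_finset hdisj (fun p _ => hQmeas p)).symm
      _ ≤ volume (Metric.closedBall (0 : ℂ) (R + w + Real.sqrt 2) \ Metric.ball (0 : ℂ) R) :=
          measure_mono (Set.iUnion₂_subset hsub)
      _ ≤ _ := hA
  rw [← ENNReal.ofReal_natCast] at hcard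
  have hnn : 0 ≤ Real.pi * ((R + w + Real.sqrt 2) ^ 2 - R ^ 2) := by
    have h2 := Real.sqrt_nonneg 2
    have hsq : R ^ 2 ≤ (R + w + Real.sqrt 2) ^ 2 := by nlinarith
    have := Real.pi_nonneg
    nlinarith
  exact (ENNReal.ofReal_le_ofReal_iff hnn).mp hcard

/-- Weighted double lattice sum bound: for `F` non-increasing and positive with
`κ_{1,2} = Σ (l+1)²F(l) < ∞`, every `m ∈ ℤ_{≥0}` and `0 < c ≤ 1`,
`Σ_{r₁,r : √(r²+r₁²)c ≥ m+1} (r₁+1)·F(√(r²+r₁²)c − (m+1))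
  ≤ (3/c)²(2√2 + 1/c)²·π·(m+1)²·κ_{1,2}`. -/
theorem stmt12 (F : ℝ → ℝ)
    (hFpos : ∀ x : ℝ, 0 ≤ x → 0 < F x)
    (hFanti : AntitoneOn F (Set.Ici 0))
    (hsum : Summable (fun l : ℕ => ((l : ℝ) + 1) ^ 2 * F l))
    (m : ℕ) (c : ℝ) (hc0 : 0 < c) (hc1 : c ≤ 1) :
    (∑' p : ℕ × ℕ,
        if ((m : ℝ) + 1) ≤ Real.sqrt ((p.2 : ℝ) ^ 2 + (p.1 : ℝ) ^ 2) * c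
        then ((p.1 : ℝ) + 1) *
          F (Real.sqrt ((p.2 : ℝ) ^ 2 + (p.1 : ℝ) ^ 2) * c - ((m : ℝ) + 1))
        else 0)
      ≤ (3 / c) ^ 2 * (2 * Real.sqrt 2 + 1 / c) ^ 2 * Real.pi * ((m : ℝ) + 1) ^ 2 *
        ∑' l : ℕ, ((l : ℝ) + 1) ^ 2 * F l := by
  classical
  have hs2 : (0:ℝ) ≤ Real.sqrt 2 := Real.sqrt_nonneg 2
  have hs2sq : Real.sqrt 2 ^ 2 = 2 := Real.sq_sqrt (by norm_num)
  have hu1 : (1:ℝ) ≤ 1 / c := by rw [le_div_iff₀ hc0]; linarith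
  have hu0 : (0:ℝ) < 1 / c := by positivity
  set K := ∑' l : ℕ, ((l : ℝ) + 1) ^ 2 * F l with hK
  set C := (3 / c) ^ 2 * (2 * Real.sqrt 2 + 1 / c) ^ 2 * Real.pi * ((m : ℝ) + 1) ^ 2 with hC
  have hKterm : ∀ l : ℕ, 0 ≤ ((l : ℝ) + 1) ^ 2 * F l := fun l =>
    mul_nonneg (by positivity) (hFpos l (by positivity)).le
  have hC0 : 0 ≤ C := by rw [hC]; positivity
  set f : ℕ × ℕ → ℝ := fun p =>
    if ((m : ℝ) + 1) ≤ Real.sqrt ((p.2 : ℝ) ^ 2 + (p.1 : ℝ) ^ 2) * c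
    then ((p.1 : ℝ) + 1) * F (Real.sqrt ((p.2 : ℝ) ^ 2 + (p.1 : ℝ) ^ 2) * c - ((m : ℝ) + 1))
    else 0 with hf
  have hf0 : ∀ p, 0 ≤ f p := by
    intro p
    rw [hf]; dsimp only
    split_ifs with h
    · exact mul_nonneg (by positivity) (hFpos _ (by linarith)).le
    · exact le_refl 0
  have key : ∀ S : Finset (ℕ × ℕ), ∑ p ∈ S, f p ≤ C * K := by
    intro S
    set g : ℕ × ℕ → ℝ := fun p =>
      ((p.1 : ℝ) + 1) * F (Real.sqrt ((p.2 : ℝ) ^ 2 + (p.1 : ℝ) ^ 2) * c - ((m : ℝ) + 1))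
      with hg
    set L : ℕ × ℕ → ℕ := fun p =>
      ⌊Real.sqrt ((p.2 : ℝ) ^ 2 + (p.1 : ℝ) ^ 2) * c - ((m : ℝ) + 1)⌋₊ with hLdef
    set S' := S.filter
      (fun p => ((m : ℝ) + 1) ≤ Real.sqrt ((p.2 : ℝ) ^ 2 + (p.1 : ℝ) ^ 2) * c) with hS'
    have h1 : ∑ p ∈ S, f p = ∑ p ∈ S', g p := by
      rw [hS', Finset.sum_filter]
    rw [h1, ← Finset.sum_fiberwise_of_maps_to
      (t := S'.image L) (fun p hp => Finset.mem_image_of_mem L hp) g]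
    have hfiber : ∀ l ∈ S'.image L,
        ∑ p ∈ S'.filter (fun p => L p = l), g p ≤ C * (((l : ℝ) + 1) ^ 2 * F l) := by
      intro l _
      set U := S'.filter (fun p => L p = l) with hU
      set R : ℝ := ((l : ℝ) + (m : ℝ) + 1) / c with hR
      have hR0 : 0 ≤ R := by positivity
      -- basic facts for members of U
      have hfacts : ∀ p ∈ U,
          R ≤ Real.sqrt ((p.2 : ℝ) ^ 2 + (p.1 : ℝ) ^ 2) ∧
          Real.sqrt ((p.2 : ℝ) ^ 2 + (p.1 : ℝ) ^ 2) < R + 1 / c := by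
        intro p hp
        rw [hU, Finset.mem_filter] at hp
        obtain ⟨hp1, hp2⟩ := hp
        rw [hS', Finset.mem_filter] at hp1
        have hcond := hp1.2
        set x := Real.sqrt ((p.2 : ℝ) ^ 2 + (p.1 : ℝ) ^ 2) with hx
        have harg0 : 0 ≤ x * c - ((m : ℝ) + 1) := by linarith
        have hfl : (l : ℝ) ≤ x * c - ((m : ℝ) + 1) := by
          rw [← hp2]; exact Nat.floor_le harg0
        have hp2' : ⌊x * c - ((m : ℝ) + 1)⌋₊ = l := hp2
        have hfu : x * c - ((m : ℝ) + 1) < (l : ℝ) + 1 := by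
          have h := Nat.lt_floor_add_one (x * c - ((m : ℝ) + 1))
          rw [hp2'] at h; exact h
        constructor
        · rw [hR, div_le_iff₀ hc0]; linarith
        · have hxc : x * c < (l : ℝ) + (m : ℝ) + 2 := by linarith
          have hxlt : x < ((l : ℝ) + (m : ℝ) + 2) / c := by
            rw [lt_div_iff₀ hc0]; linarith
          have heq : ((l : ℝ) + (m : ℝ) + 2) / c = R + 1 / c := by
            rw [hR]; ring
          linarith [heq ▸ hxlt]
      -- count bound
      have hcard : (U.card : ℝ) ≤
          Real.pi * ((R + 1 / c + Real.sqrt 2) ^ 2 - R ^ 2) :=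
        sq_count R (1 / c) hR0 hu0.le U hfacts
      -- arithmetic: annulus area bound
      have hA : (R + 1 / c + Real.sqrt 2) ^ 2 - R ^ 2 ≤
          (2 * Real.sqrt 2 + 1 / c) ^ 2 * (R + 1) := by
        nlinarith [mul_nonneg hR0 (sub_nonneg.2 hu1), mul_nonneg hR0 hs2,
          mul_nonneg (mul_nonneg hR0 hs2) (sub_nonneg.2 hu1),
          mul_nonneg hs2 (sub_nonneg.2 hu1), sq_nonneg (1 / c - 1),
          mul_nonneg hR0 (sq_nonneg (1 / c - 1))]
      have hml : ((l : ℝ) + (m : ℝ) + 3) ≤ 3 * ((m : ℝ) + 1) * ((l : ℝ) + 1) := by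
        nlinarith [Nat.cast_nonneg (α := ℝ) l, Nat.cast_nonneg (α := ℝ) m]
      have hR1 : R + 1 ≤ 3 * ((m : ℝ) + 1) * ((l : ℝ) + 1) / c := by
        have h2 : ((l : ℝ) + (m : ℝ) + 2) / c = R + 1 / c := by rw [hR]; ring
        have h3 : ((l : ℝ) + (m : ℝ) + 2) / c ≤ 3 * ((m : ℝ) + 1) * ((l : ℝ) + 1) / c := by
          gcongr
          linarith
        linarith
      -- per-term bound
      have hFl0 : 0 ≤ F l := (hFpos l (by positivity)).le
      set Bl : ℝ := 3 * ((m : ℝ) + 1) * ((l : ℝ) + 1) / c * F l with hBl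
      have hBl0 : 0 ≤ Bl := by rw [hBl]; positivity
      have hgB : ∀ p ∈ U, g p ≤ Bl := by
        intro p hp
        obtain ⟨hge, hlt⟩ := hfacts p hp
        rw [hU, Finset.mem_filter] at hp
        obtain ⟨hp1, hp2⟩ := hp
        rw [hS', Finset.mem_filter] at hp1
        have hcond := hp1.2
        set x := Real.sqrt ((p.2 : ℝ) ^ 2 + (p.1 : ℝ) ^ 2) with hx
        have harg0 : 0 ≤ x * c - ((m : ℝ) + 1) := by linarith
        have hp2' : ⌊x * c - ((m : ℝ) + 1)⌋₊ = l := hp2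
        have hfl : (l : ℝ) ≤ x * c - ((m : ℝ) + 1) := by
          rw [← hp2']; exact Nat.floor_le harg0
        have hFle : F (x * c - ((m : ℝ) + 1)) ≤ F l :=
          hFanti (Set.mem_Ici.2 (by positivity)) (Set.mem_Ici.2 harg0) hfl
        have hp1x : (p.1 : ℝ) ≤ x :=
          calc (p.1 : ℝ) = Real.sqrt ((p.1 : ℝ) ^ 2) := (Real.sqrt_sq (Nat.cast_nonneg _)).symm
            _ ≤ x := by
                rw [hx]
                exact Real.sqrt_le_sqrt (by nlinarith [sq_nonneg ((p.2 : ℝ))])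
        have hxc : x * c < (l : ℝ) + (m : ℝ) + 2 := by
          have h := Nat.lt_floor_add_one (x * c - ((m : ℝ) + 1))
          rw [hp2'] at h; linarith
        have hcoord : (p.1 : ℝ) + 1 ≤ 3 * ((m : ℝ) + 1) * ((l : ℝ) + 1) / c := by
          rw [le_div_iff₀ hc0]
          have hpc : (p.1 : ℝ) * c ≤ x * c := mul_le_mul_of_nonneg_right hp1x hc0.le
          have hexp : ((p.1 : ℝ) + 1) * c = (p.1 : ℝ) * c + c := by ring
          linarith
        calc g p = ((p.1 : ℝ) + 1) * F (x * c - ((m : ℝ) + 1)) := rfl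
          _ ≤ ((p.1 : ℝ) + 1) * F l := mul_le_mul_of_nonneg_left hFle (by positivity)
          _ ≤ 3 * ((m : ℝ) + 1) * ((l : ℝ) + 1) / c * F l :=
              mul_le_mul_of_nonneg_right hcoord hFl0
          _ = Bl := rfl
      have hsumU : ∑ p ∈ U, g p ≤ (U.card : ℝ) * Bl := by
        have h := Finset.sum_le_card_nsmul U g Bl hgB
        simpa [nsmul_eq_mul] using h
      have hcard2 : (U.card : ℝ) * Bl ≤
          Real.pi * ((2 * Real.sqrt 2 + 1 / c) ^ 2 *
            (3 * ((m : ℝ) + 1) * ((l : ℝ) + 1) / c)) * Bl := by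
        apply mul_le_mul_of_nonneg_right _ hBl0
        refine hcard.trans ?_
        apply mul_le_mul_of_nonneg_left _ Real.pi_nonneg
        refine hA.trans ?_
        exact mul_le_mul_of_nonneg_left hR1 (by positivity)
      have hfin : Real.pi * ((2 * Real.sqrt 2 + 1 / c) ^ 2 *
            (3 * ((m : ℝ) + 1) * ((l : ℝ) + 1) / c)) * Bl
          = C * (((l : ℝ) + 1) ^ 2 * F l) := by
        rw [hBl, hC]
        field_simp
      calc ∑ p ∈ U, g p ≤ (U.card : ℝ) * Bl := hsumU
        _ ≤ _ := hcard2
        _ = C * (((l : ℝ) + 1) ^ 2 * F l) := hfin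
    calc ∑ j ∈ S'.image L, ∑ i ∈ S'.filter (fun i => L i = j), g i
        ≤ ∑ j ∈ S'.image L, C * (((j : ℝ) + 1) ^ 2 * F j) := Finset.sum_le_sum hfiber
      _ = C * ∑ j ∈ S'.image L, ((j : ℝ) + 1) ^ 2 * F j := by rw [Finset.mul_sum]
      _ ≤ C * K := mul_le_mul_of_nonneg_left
          (Summable.sum_le_tsum _ (fun j _ => hKterm j) hsum) hC0
  exact Summable.tsum_le_of_sum_le (summable_of_sum_le hf0 key) key
end
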